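/- arXiv:1304.0219 — 2 statements merged into one kernel-verified Lean document; each statement's English description precedes it below -/
import Mathlib

section
/- (Riedtmann's Formula) Let q be a prime power, Q a finite quiver, and M, N, E finite-dimensional representations of Q over 𝔽_q. Then P^E_{MN} = e_E(M,N) · |Aut(E)| / |Hom(M,N)|, where e_E(M,N) denotes the number of Yoneda-equivalence classes of short exact sequences 0 → N → E′ → M → 0 whose middle term E′ is isomorphic to E. -/
open CategoryTheory Module

/-- A pair of morphisms `f : N ⟶ E`, `g : E ⟶ M` of quiver representations forming a
short exact sequence `0 → N →f E →g M → 0` (i.e. vertexwise injective, surjective and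
exact in the middle). -/
def IsShortExactPair {k : Type} [Field k] {Q : Type} [Quiver.{1} Q]
    {M N E : Paths Q ⥤ ModuleCat k} (f : N ⟶ E) (g : E ⟶ M) : Prop :=
  (∀ v : Paths Q, Function.Injective (f.app v)) ∧
  (∀ v : Paths Q, Function.Surjective (g.app v)) ∧
  (∀ v : Paths Q, LinearMap.range (f.app v).hom = LinearMap.ker (g.app v).hom)

/-- `hallP M N E` is the number `P^E_{MN}` of pairs `(f,g)` such that
`0 → N →f E →g M → 0` is a short exact sequence. -/
noncomputable def hallP {k : Type} [Field k] {Q : Type} [Quiver.{1} Q]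
    (M N E : Paths Q ⥤ ModuleCat k) : ℕ :=
  Nat.card {fg : (N ⟶ E) × (E ⟶ M) // IsShortExactPair fg.1 fg.2}

/-- The type of all extensions `0 → N → E′ → M → 0` of `M` by `N`. -/
def ExtensionsOf {k : Type} [Field k] {Q : Type} [Quiver.{1} Q]
    (M N : Paths Q ⥤ ModuleCat k) : Type _ :=
  Σ E' : Paths Q ⥤ ModuleCat k, {fg : (N ⟶ E') × (E' ⟶ M) // IsShortExactPair fg.1 fg.2}

/-- Yoneda equivalence of extensions: two short exact sequences `0 → N → E′ → M → 0`
and `0 → N → E″ → M → 0` are equivalent when there is an isomorphism `E′ ≅ E″`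
commuting with the given maps from `N` and to `M`. -/
def YonedaEquiv {k : Type} [Field k] {Q : Type} [Quiver.{1} Q]
    {M N : Paths Q ⥤ ModuleCat k} (x y : ExtensionsOf M N) : Prop :=
  ∃ β : x.1 ≅ y.1, x.2.1.1 ≫ β.hom = y.2.1.1 ∧ β.hom ≫ y.2.1.2 = x.2.1.2

namespace RiedtmannAux

variable {k : Type} [Field k] {Q : Type} [Quiver.{1} Q]

variable (M N E : Paths Q ⥤ ModuleCat k) in
/-- The set of short exact pairs with fixed middle term `E`. -/
abbrev SESPairs := {fg : (N ⟶ E) × (E ⟶ M) // IsShortExactPair fg.1 fg.2}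

section ElementLemmas

variable {F G H : Paths Q ⥤ ModuleCat k}

lemma comp_app_apply (t : F ⟶ G) (s : G ⟶ H) (v : Paths Q) (x : F.obj v) :
    (t ≫ s).app v x = s.app v (t.app v x) := by simp

lemma nat_apply (t : F ⟶ G) {v v' : Paths Q} (a : v ⟶ v') (x : F.obj v) :
    t.app v' (F.map a x) = G.map a (t.app v x) := by
  have := congrArg (fun (s : F.obj v ⟶ G.obj v') => s x) (t.naturality a)
  simp only [ModuleCat.comp_apply, Function.comp_apply] at this
  exact this

lemma iso_inv_hom_apply (β : F ≅ G) (v : Paths Q) (x : F.obj v) :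
    β.inv.app v (β.hom.app v x) = x := by
  have := congrArg (fun (s : F.obj v ⟶ F.obj v) => s x) (β.hom_inv_id_app v)
  simp only [ModuleCat.comp_apply, Function.comp_apply, ModuleCat.id_apply] at this
  exact this

lemma iso_hom_inv_apply (β : F ≅ G) (v : Paths Q) (x : G.obj v) :
    β.hom.app v (β.inv.app v x) = x := by
  have := congrArg (fun (s : G.obj v ⟶ G.obj v) => s x) (β.inv_hom_id_app v)
  simp only [ModuleCat.comp_apply, Function.comp_apply, ModuleCat.id_apply] at this
  exact this

lemma eq_apply_of_eq {t s : F ⟶ G} (h : t = s) (v : Paths Q) (x : F.obj v) :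
    t.app v x = s.app v x := by rw [h]

end ElementLemmas

variable {M N E : Paths Q ⥤ ModuleCat k}

lemma ses_comp_iso {E' : Paths Q ⥤ ModuleCat k} {f : N ⟶ E'} {g : E' ⟶ M}
    (h : IsShortExactPair f g) (β : E' ≅ E) :
    IsShortExactPair (f ≫ β.hom) (β.inv ≫ g) := by
  obtain ⟨h1, h2, h3⟩ := h
  refine ⟨fun v => ?_, fun v => ?_, fun v => ?_⟩
  · intro x y hxy
    have : β.inv.app v ((f ≫ β.hom).app v x) = β.inv.app v ((f ≫ β.hom).app v y) := by
      rw [hxy]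
    rw [comp_app_apply, comp_app_apply, iso_inv_hom_apply, iso_inv_hom_apply] at this
    exact h1 v this
  · intro m
    obtain ⟨e, he⟩ := h2 v m
    refine ⟨β.hom.app v e, ?_⟩
    rw [comp_app_apply, iso_inv_hom_apply, he]
  · ext x
    simp only [LinearMap.mem_range, LinearMap.mem_ker]
    constructor
    · rintro ⟨y, rfl⟩
      have hy : f.app v y ∈ LinearMap.ker (g.app v).hom := (h3 v) ▸ ⟨y, rfl⟩
      rw [comp_app_apply, comp_app_apply, iso_inv_hom_apply]
      exact hy
    · intro hx
      have hxm : β.inv.app v x ∈ LinearMap.range (f.app v).hom := by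
        rw [h3 v]
        rw [comp_app_apply] at hx
        exact hx
      obtain ⟨y, hy⟩ := hxm
      refine ⟨y, ?_⟩
      rw [comp_app_apply, hy, iso_hom_inv_apply]

lemma ses_comp_eq_zero {f : N ⟶ E} {g : E ⟶ M}
    (h : IsShortExactPair f g) : f ≫ g = 0 := by
  ext v x
  have : f.app v x ∈ LinearMap.ker (g.app v).hom := (h.2.2 v) ▸ ⟨x, rfl⟩
  simpa using this

lemma hom_factor_unique {f : N ⟶ E} {g : E ⟶ M} (hse : IsShortExactPair f g)
    {h h' : M ⟶ N} (heq : g ≫ h ≫ f = g ≫ h' ≫ f) : h = h' := by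
  obtain ⟨hinj, hsurj, -⟩ := hse
  ext v m
  obtain ⟨e, rfl⟩ := hsurj v m
  apply hinj v
  have := eq_apply_of_eq heq v e
  rw [comp_app_apply, comp_app_apply, comp_app_apply, comp_app_apply] at this
  exact this

lemma exists_hom_factor {f : N ⟶ E} {g : E ⟶ M} (hse : IsShortExactPair f g)
    (u : E ⟶ E) (h1 : f ≫ u = 0) (h2 : u ≫ g = 0) :
    ∃ h : M ⟶ N, g ≫ h ≫ f = u := by
  obtain ⟨hinj, hsurj, hex⟩ := hse
  have hσ : ∀ v : Paths Q, ∃ σ : M.obj v →ₗ[k] E.obj v,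
      (g.app v).hom ∘ₗ σ = LinearMap.id := fun v =>
    (g.app v).hom.exists_rightInverse_of_surjective (LinearMap.range_eq_top.2 (hsurj v))
  choose σ hσ using hσ
  have hl : ∀ v : Paths Q, ∃ l : E.obj v →ₗ[k] N.obj v,
      l ∘ₗ (f.app v).hom = LinearMap.id := fun v =>
    (f.app v).hom.exists_leftInverse_of_injective (LinearMap.ker_eq_bot.2 (hinj v))
  choose l hl using hl
  have hker : ∀ (v : Paths Q) (x : E.obj v), g.app v x = 0 → u.app v x = 0 := by
    intro v x hx
    have : x ∈ LinearMap.range (f.app v).hom := by rw [hex v]; exact hx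
    obtain ⟨y, rfl⟩ := this
    have h1' := eq_apply_of_eq h1 v y
    rw [comp_app_apply] at h1'
    simpa using h1'
  have hrange : ∀ (v : Paths Q) (x : E.obj v), ∃ y, f.app v y = u.app v x := by
    intro v x
    have h2' := eq_apply_of_eq h2 v x
    rw [comp_app_apply] at h2'
    have : u.app v x ∈ LinearMap.ker (g.app v).hom := by simpa using h2'
    rw [← hex v] at this
    exact this

  set happ := fun v : Paths Q => (l v) ∘ₗ (u.app v).hom ∘ₗ (σ v) with happ_def
  have hkey : ∀ (v : Paths Q) (e : E.obj v),
      f.app v (happ v (g.app v e)) = u.app v e := by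
    intro v e
    have e1 : u.app v (σ v (g.app v e)) = u.app v e := by
      have hz : g.app v (σ v (g.app v e) - e) = 0 := by
        have := LinearMap.congr_fun (hσ v) (g.app v e)
        simp only [LinearMap.comp_apply, LinearMap.id_apply] at this
        rw [map_sub, this, sub_self]
      have h0 := hker v _ hz
      rw [map_sub] at h0
      exact sub_eq_zero.mp h0
    obtain ⟨y, hy⟩ := hrange v (σ v (g.app v e))
    have hly : l v (f.app v y) = y := by
      have := LinearMap.congr_fun (hl v) y
      simpa using this
    calc f.app v (happ v (g.app v e))
        = f.app v (l v (u.app v (σ v (g.app v e)))) := rfl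
      _ = f.app v (l v (f.app v y)) := by rw [hy]
      _ = f.app v y := by rw [hly]
      _ = u.app v (σ v (g.app v e)) := hy
      _ = u.app v e := e1
  refine ⟨{ app := fun v => ModuleCat.ofHom (happ v), naturality := ?_ }, ?_⟩
  · intro v v' a
    ext m
    obtain ⟨e, rfl⟩ := hsurj v m
    apply hinj v'
    simp only [ModuleCat.comp_apply, Function.comp_apply, ModuleCat.ofHom_apply]
    change f.app v' (happ v' (M.map a (g.app v e))) = f.app v' (N.map a (happ v (g.app v e)))
    rw [nat_apply f a (happ v (g.app v e))]
    rw [hkey v e]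
    rw [← nat_apply g a e]
    rw [hkey v' (E.map a e)]
    rw [nat_apply u a e]
  · ext v e
    simp only [NatTrans.comp_app, ModuleCat.comp_apply, Function.comp_apply, ModuleCat.ofHom_apply]
    exact hkey v e

instance : SMul (Aut E) (SESPairs M N E) :=
  ⟨fun α s => ⟨(s.1.1 ≫ α.hom, α.inv ≫ s.1.2), ses_comp_iso s.2 α⟩⟩

@[simp] lemma smul_val (α : Aut E) (s : SESPairs M N E) :
    (α • s).1 = (s.1.1 ≫ α.hom, α.inv ≫ s.1.2) := rfl

instance : MulAction (Aut E) (SESPairs M N E) where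
  one_smul s := Subtype.ext (by
    show (s.1.1 ≫ 𝟙 E, 𝟙 E ≫ s.1.2) = s.1
    simp)
  mul_smul α β s := Subtype.ext (by
    show (s.1.1 ≫ (β.hom ≫ α.hom), (α.inv ≫ β.inv) ≫ s.1.2)
      = ((s.1.1 ≫ β.hom) ≫ α.hom, α.inv ≫ (β.inv ≫ s.1.2))
    simp)

/-- The stabilizer of a short exact pair is in bijection with `Hom(M,N)`. -/
noncomputable def stabEquiv (s : SESPairs M N E) :
    (M ⟶ N) ≃ MulAction.stabilizer (Aut E) s := by
  obtain ⟨⟨f, g⟩, hse⟩ := s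
  have h0 : f ≫ g = 0 := ses_comp_eq_zero hse
  have huu : ∀ h h' : M ⟶ N, (g ≫ h ≫ f) ≫ (g ≫ h' ≫ f) = 0 := by
    intro h h'
    rw [show (g ≫ h ≫ f) ≫ (g ≫ h' ≫ f) = g ≫ h ≫ (f ≫ g) ≫ (h' ≫ f) by
      simp only [Category.assoc], h0]
    simp
  refine Equiv.ofBijective (fun h => ⟨show Aut E from
    { hom := 𝟙 E + g ≫ h ≫ f
      inv := 𝟙 E - g ≫ h ≫ f
      hom_inv_id := by
        simp only [Preadditive.add_comp, Preadditive.comp_sub, Category.id_comp,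
          Category.comp_id, huu h h, sub_zero]
        abel
      inv_hom_id := by
        simp only [Preadditive.sub_comp, Preadditive.comp_add, Category.id_comp,
          Category.comp_id, huu h h, sub_zero]
        abel }, ?_⟩) ⟨?_, ?_⟩
  · rw [MulAction.mem_stabilizer_iff]
    apply Subtype.ext
    show (f ≫ (𝟙 E + g ≫ h ≫ f), (𝟙 E - g ≫ h ≫ f) ≫ g) = (f, g)
    have c1 : f ≫ (𝟙 E + g ≫ h ≫ f) = f := by
      rw [Preadditive.comp_add, Category.comp_id,
        show f ≫ g ≫ h ≫ f = (f ≫ g) ≫ (h ≫ f) by simp only [Category.assoc], h0]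
      simp
    have c2 : (𝟙 E - g ≫ h ≫ f) ≫ g = g := by
      rw [Preadditive.sub_comp, Category.id_comp,
        show (g ≫ h ≫ f) ≫ g = g ≫ h ≫ (f ≫ g) by simp only [Category.assoc], h0]
      simp
    rw [c1, c2]
  · intro h h' hhh
    have hv : (𝟙 E + g ≫ h ≫ f) = (𝟙 E + g ≫ h' ≫ f) :=
      congrArg (fun t : Aut E => t.hom) (Subtype.ext_iff.mp hhh)
    exact hom_factor_unique hse (add_left_cancel hv)
  · rintro ⟨α, hα⟩
    rw [MulAction.mem_stabilizer_iff] at hα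
    have hval := congrArg Subtype.val hα
    have hc1 : f ≫ α.hom = f := congrArg Prod.fst hval
    have hc2 : α.inv ≫ g = g := congrArg Prod.snd hval
    have hc2' : α.hom ≫ g = g := by
      conv_lhs => rw [← hc2]
      rw [← Category.assoc, α.hom_inv_id, Category.id_comp]
    obtain ⟨h, hh⟩ := exists_hom_factor hse (α.hom - 𝟙 E)
      (by rw [Preadditive.comp_sub, hc1, Category.comp_id, sub_self])
      (by rw [Preadditive.sub_comp, hc2', Category.id_comp, sub_self])
    refine ⟨h, ?_⟩
    apply Subtype.ext
    apply Aut.ext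
    show 𝟙 E + g ≫ h ≫ f = α.hom
    rw [hh]
    abel

variable (E) in
/-- Transport an extension with middle term isomorphic to `E` to a short exact pair on `E`. -/
noncomputable def transport (x : {z : ExtensionsOf M N // Nonempty (z.1 ≅ E)}) :
    SESPairs M N E :=
  ⟨(x.1.2.1.1 ≫ x.2.some.hom, x.2.some.inv ≫ x.1.2.1.2), ses_comp_iso x.1.2.2 x.2.some⟩

variable (M N E) in
/-- Orbits of `Aut E` on short exact pairs are Yoneda classes of extensions with middle
term isomorphic to `E`. -/
noncomputable def orbitEquivQuot :
    Quotient (MulAction.orbitRel (Aut E) (SESPairs M N E)) ≃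
      Quot (fun x y : {z : ExtensionsOf M N // Nonempty (z.1 ≅ E)} => YonedaEquiv x.1 y.1) where
  toFun := Quotient.lift
    (fun s => Quot.mk _ ⟨⟨E, s⟩, ⟨Iso.refl E⟩⟩)
    (by
      intro a b hab
      obtain ⟨α, rfl⟩ := MulAction.mem_orbit_iff.mp (MulAction.orbitRel_apply.mp hab)
      refine Quot.sound ⟨α.symm, ?_, ?_⟩
      · show (b.1.1 ≫ α.hom) ≫ α.inv = b.1.1
        rw [Category.assoc]
        exact (congrArg (b.1.1 ≫ ·) α.hom_inv_id).trans (Category.comp_id _)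
      · show α.inv ≫ b.1.2 = α.inv ≫ b.1.2
        rfl)
  invFun := Quot.lift (fun x => Quotient.mk _ (transport E x))
    (by
      intro x y hxy
      obtain ⟨γ, hγ1, hγ2⟩ := hxy
      apply Quotient.sound
      show transport E x ∈ MulAction.orbit (Aut E) (transport E y)
      rw [MulAction.mem_orbit_iff]
      refine ⟨show Aut E from
        { hom := y.2.some.inv ≫ γ.inv ≫ x.2.some.hom
          inv := x.2.some.inv ≫ γ.hom ≫ y.2.some.hom
          hom_inv_id := by simp
          inv_hom_id := by simp }, ?_⟩
      apply Subtype.ext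
      show ((y.1.2.1.1 ≫ y.2.some.hom) ≫ (y.2.some.inv ≫ γ.inv ≫ x.2.some.hom),
          (x.2.some.inv ≫ γ.hom ≫ y.2.some.hom) ≫ (y.2.some.inv ≫ y.1.2.1.2))
        = (x.1.2.1.1 ≫ x.2.some.hom, x.2.some.inv ≫ x.1.2.1.2)
      have c1 : (y.1.2.1.1 ≫ y.2.some.hom) ≫ (y.2.some.inv ≫ γ.inv ≫ x.2.some.hom)
          = x.1.2.1.1 ≫ x.2.some.hom := by
        rw [← hγ1]
        simp
      have c2 : (x.2.some.inv ≫ γ.hom ≫ y.2.some.hom) ≫ (y.2.some.inv ≫ y.1.2.1.2)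
          = x.2.some.inv ≫ x.1.2.1.2 := by
        rw [← hγ2]
        simp
      rw [c1, c2])
  left_inv := by
    intro ω
    refine Quotient.inductionOn ω ?_
    intro s
    apply Quotient.sound
    show transport E ⟨⟨E, s⟩, ⟨Iso.refl E⟩⟩ ∈ MulAction.orbit (Aut E) s
    rw [MulAction.mem_orbit_iff]
    refine ⟨show Aut E from
      (⟨⟨E, s⟩, ⟨Iso.refl E⟩⟩ : {z : ExtensionsOf M N // Nonempty (z.1 ≅ E)}).2.some, ?_⟩
    rfl
  right_inv := by
    intro z
    refine Quot.inductionOn z ?_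
    intro x
    refine (Quot.sound ⟨x.2.some, rfl, ?_⟩).symm
    show x.2.some.hom ≫ (x.2.some.inv ≫ x.1.2.1.2) = x.1.2.1.2
    simp

lemma finite_hom [Finite k] [Finite Q] (X Y : Paths Q ⥤ ModuleCat k)
    (hX : ∀ v : Paths Q, FiniteDimensional k (X.obj v))
    (hY : ∀ v : Paths Q, FiniteDimensional k (Y.obj v)) : Finite (X ⟶ Y) := by
  haveI : Finite (Paths Q) := inferInstanceAs (Finite Q)
  haveI hfX : ∀ v : Paths Q, Finite (X.obj v) := fun v => by
    haveI := hX v; exact Module.finite_of_finite k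
  haveI hfY : ∀ v : Paths Q, Finite (Y.obj v) := fun v => by
    haveI := hY v; exact Module.finite_of_finite k
  haveI : ∀ v : Paths Q, Finite (↑(X.obj v) →ₗ[k] ↑(Y.obj v)) := fun v =>
    Finite.of_injective (fun φ => (φ : X.obj v → Y.obj v)) DFunLike.coe_injective
  exact Finite.of_injective
    (fun (η : X ⟶ Y) => (fun v : Paths Q => (η.app v).hom :
      ∀ v : Paths Q, ↑(X.obj v) →ₗ[k] ↑(Y.obj v)))
    (fun η η' hh => by
      apply NatTrans.ext
      funext v
      exact ModuleCat.hom_ext (congrFun hh v))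

end RiedtmannAux

/-- **Riedtmann's formula.**  For finite-dimensional representations `M`, `N`, `E` of a
finite quiver `Q` over `𝔽_q`, one has
`P^E_{MN} = e_E(M,N) · |Aut E| / |Hom(M,N)|`, where `e_E(M,N)` is the number of
Yoneda-equivalence classes of short exact sequences `0 → N → E′ → M → 0` whose middle
term is isomorphic to `E`. -/
theorem riedtmann_formula
    (p n : ℕ) [Fact p.Prime] (hn : n ≠ 0)
    (Q : Type) [Quiver.{1} Q] [Finite Q] [∀ a b : Q, Finite (a ⟶ b)]
    (M N E : Paths Q ⥤ ModuleCat (GaloisField p n))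
    (hM : ∀ v : Paths Q, FiniteDimensional (GaloisField p n) (M.obj v))
    (hN : ∀ v : Paths Q, FiniteDimensional (GaloisField p n) (N.obj v))
    (hE : ∀ v : Paths Q, FiniteDimensional (GaloisField p n) (E.obj v)) :
    (hallP M N E : ℚ)
      = (Nat.card (Quot (fun x y : {z : ExtensionsOf M N // Nonempty (z.1 ≅ E)} =>
            YonedaEquiv x.1 y.1)) : ℚ)
          * Nat.card (Aut E) / Nat.card (M ⟶ N) := by
  classical
  haveI : Finite (N ⟶ E) := RiedtmannAux.finite_hom N E hN hE
  haveI : Finite (E ⟶ M) := RiedtmannAux.finite_hom E M hE hM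
  haveI : Finite (M ⟶ N) := RiedtmannAux.finite_hom M N hM hN
  haveI : Finite (E ⟶ E) := RiedtmannAux.finite_hom E E hE hE
  haveI : Finite (RiedtmannAux.SESPairs M N E) := Subtype.finite
  haveI : Finite (Aut E) := Finite.of_injective
    (fun α => ((α.hom, α.inv) : (E ⟶ E) × (E ⟶ E)))
    (fun α β h => Aut.ext (congrArg Prod.fst h))
  haveI : Finite (Quotient (MulAction.orbitRel (Aut E) (RiedtmannAux.SESPairs M N E))) :=
    Quotient.finite _
  haveI : Fintype (Quotient (MulAction.orbitRel (Aut E) (RiedtmannAux.SESPairs M N E))) :=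
    Fintype.ofFinite _
  haveI : Fintype (RiedtmannAux.SESPairs M N E) := Fintype.ofFinite _
  haveI : ∀ ω : Quotient (MulAction.orbitRel (Aut E) (RiedtmannAux.SESPairs M N E)),
      Fintype ((Aut E) ⧸ MulAction.stabilizer (Aut E) ω.out) := fun ω => by
    haveI : Finite ((Aut E) ⧸ MulAction.stabilizer (Aut E) ω.out) := Quotient.finite _
    exact Fintype.ofFinite _
  have h1 : Nat.card (RiedtmannAux.SESPairs M N E)
      = ∑ ω : Quotient (MulAction.orbitRel (Aut E) (RiedtmannAux.SESPairs M N E)),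
          Nat.card ((Aut E) ⧸ MulAction.stabilizer (Aut E) ω.out) := by
    rw [Nat.card_eq_fintype_card,
      Fintype.card_congr (MulAction.selfEquivSigmaOrbitsQuotientStabilizer (Aut E)
        (RiedtmannAux.SESPairs M N E)),
      Fintype.card_sigma]
    exact Finset.sum_congr rfl (fun ω _ => (Nat.card_eq_fintype_card).symm)
  have h2 : ∀ ω : Quotient (MulAction.orbitRel (Aut E) (RiedtmannAux.SESPairs M N E)),
      Nat.card ((Aut E) ⧸ MulAction.stabilizer (Aut E) ω.out) * Nat.card (M ⟶ N)
        = Nat.card (Aut E) := by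
    intro ω
    rw [Nat.card_congr (RiedtmannAux.stabEquiv ω.out)]
    exact (Subgroup.card_eq_card_quotient_mul_card_subgroup _).symm
  have key : Nat.card (RiedtmannAux.SESPairs M N E) * Nat.card (M ⟶ N)
      = Nat.card (Quotient (MulAction.orbitRel (Aut E) (RiedtmannAux.SESPairs M N E)))
          * Nat.card (Aut E) := by
    rw [h1, Finset.sum_mul]
    rw [Finset.sum_congr rfl (fun ω _ => h2 ω)]
    simp [Nat.card_eq_fintype_card, Finset.sum_const, Finset.card_univ, mul_comm]
  have hquot : Nat.card (Quot (fun x y : {z : ExtensionsOf M N // Nonempty (z.1 ≅ E)} =>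
      YonedaEquiv x.1 y.1))
      = Nat.card (Quotient (MulAction.orbitRel (Aut E) (RiedtmannAux.SESPairs M N E))) :=
    (Nat.card_congr (RiedtmannAux.orbitEquivQuot M N E)).symm
  have hMN0 : (Nat.card (M ⟶ N) : ℚ) ≠ 0 := by
    have : Nat.card (M ⟶ N) ≠ 0 := Nat.card_ne_zero.mpr ⟨⟨0⟩, inferInstance⟩
    exact_mod_cast this
  rw [eq_div_iff hMN0]
  rw [show hallP M N E = Nat.card (RiedtmannAux.SESPairs M N E) from rfl, hquot]
  exact_mod_cast key
end

section
/- Let X be a groupoid with finitely many objects and finite hom-sets. Then ∑_{[x]} 1/|Aut(x)| = ∑_{x} 1/|Mor(x,−)|, where the left-hand sum ranges over the isomorphism classes of objects of X (with Aut(x) the automorphism group of a representative x), the right-hand sum ranges over all objects x of X, and Mor(x,−) denotes the set of all morphisms of X whose source is x. -/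
open CategoryTheory

universe u v

/-- **Alternate formula for groupoid cardinality.**  For a groupoid `X` with finitely
many objects and finite hom-sets,
`∑_{[x]} 1/|Aut x| = ∑_{x} 1/|Mor(x,−)|`, where the left sum ranges over isomorphism
classes of objects and the right sum over all objects, `Mor(x,−)` denoting the set of
all morphisms with source `x`. -/
theorem groupoid_cardinality_eq_sum_over_objects
    (X : Type u) [Groupoid.{v} X] [Finite X] [∀ x y : X, Finite (x ⟶ y)] :
    ∑ᶠ c : Quotient (isIsomorphicSetoid X), (1 : ℚ) / Nat.card (Aut c.out)
      = ∑ᶠ x : X, (1 : ℚ) / Nat.card (Σ y : X, x ⟶ y) := by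
  classical
  cases nonempty_fintype X
  letI : ∀ x y : X, Fintype (x ⟶ y) := fun _ _ => Fintype.ofFinite _
  rw [finsum_eq_sum_of_fintype, finsum_eq_sum_of_fintype]
  rw [← Finset.sum_fiberwise Finset.univ
      (fun x : X => (⟦x⟧ : Quotient (isIsomorphicSetoid X)))
      (fun x => (1 : ℚ) / Nat.card (Σ y : X, x ⟶ y))]
  refine Finset.sum_congr rfl fun c _ => ?_
  set n := (Finset.univ.filter fun x : X =>
      (⟦x⟧ : Quotient (isIsomorphicSetoid X)) = c).card with hn
  set A := Nat.card (Aut c.out) with hA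
  have key : ∀ x : X, (⟦x⟧ : Quotient (isIsomorphicSetoid X)) = c →
      Nat.card (Σ y : X, x ⟶ y) = n * A := by
    intro x hx
    obtain ⟨e⟩ : Nonempty (x ≅ c.out) := Quotient.exact (hx.trans c.out_eq.symm)
    have hcard : ∀ y : X, Nat.card (x ⟶ y) =
        if (⟦y⟧ : Quotient (isIsomorphicSetoid X)) = c then A else 0 := by
      intro y
      split_ifs with h
      · obtain ⟨f⟩ : Nonempty (x ≅ y) := Quotient.exact (hx.trans h.symm)
        refine Nat.card_congr ((Groupoid.isoEquivHom x y).symm.trans ?_)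
        exact ⟨fun g => e.symm ≪≫ g ≪≫ f.symm ≪≫ e,
               fun h => e ≪≫ h ≪≫ e.symm ≪≫ f,
               fun g => by simp, fun h => (by simp : ∀ k : c.out ≅ c.out, e.symm ≪≫ (e ≪≫ k ≪≫ e.symm ≪≫ f) ≪≫ f.symm ≪≫ e = k) h⟩
      · have : IsEmpty (x ⟶ y) := ⟨fun f =>
          h (hx ▸ (Quotient.sound ⟨((Groupoid.isoEquivHom x y).symm f).symm⟩ : (⟦y⟧ : Quotient (isIsomorphicSetoid X)) = ⟦x⟧))⟩
        exact Nat.card_of_isEmpty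
    rw [Nat.card_eq_fintype_card, Fintype.card_sigma]
    calc ∑ y : X, Fintype.card (x ⟶ y)
        = ∑ y : X, if (⟦y⟧ : Quotient (isIsomorphicSetoid X)) = c then A else 0 := by
          refine Finset.sum_congr rfl fun y _ => ?_
          rw [← Nat.card_eq_fintype_card, hcard y]
      _ = n * A := by rw [← Finset.sum_filter, Finset.sum_const, smul_eq_mul]
  have hn0 : n ≠ 0 :=
    (Finset.card_pos.mpr ⟨c.out, Finset.mem_filter.mpr ⟨Finset.mem_univ _, c.out_eq⟩⟩).ne'
  have hA0 : A ≠ 0 := by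
    have : Finite (Aut c.out) := Finite.of_equiv _ (Groupoid.isoEquivHom _ _).symm
    exact Nat.card_pos.ne'
  calc (1 : ℚ) / A
      = n • ((1 : ℚ) / (n * A)) := by
        rw [nsmul_eq_mul]
        field_simp
    _ = ∑ x ∈ Finset.univ.filter (fun x : X =>
          (⟦x⟧ : Quotient (isIsomorphicSetoid X)) = c), (1 : ℚ) / Nat.card (Σ y : X, x ⟶ y) := by
        symm
        rw [Finset.sum_congr rfl (fun x hx =>
          show (1 : ℚ) / Nat.card (Σ y : X, x ⟶ y) = 1 / (↑n * ↑A) by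
            rw [key x (Finset.mem_filter.mp hx).2]; push_cast; ring),
          Finset.sum_const, ← hn]
end
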